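/- For every set F ⊆ ℝ^n, the function θ ↦ dim_{A,reg}^θ(F) is nondecreasing on (0,1), and for every compact interval [a,b] ⊂ (0,1) there exists L ≥ 0 such that |dim_{A,reg}^{θ₁}(F) − dim_{A,reg}^{θ₂}(F)| ≤ L·|θ₁ − θ₂| for all θ₁, θ₂ ∈ [a,b]; in particular, θ ↦ dim_{A,reg}^θ(F) is continuous on (0,1). -/

import Mathlib

open Set Metric
open scoped ENNReal

noncomputable section

/-- Covering number: the smallest number of sets of diameter at most `r` needed to
cover `F` (`∞` if no finite such cover exists). -/
def coverN {X : Type*} [PseudoMetricSpace X] (F : Set X) (r : ℝ) : ℝ≥0∞ :=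
  sInf {m : ℝ≥0∞ | ∃ 𝒰 : Finset (Set X), (𝒰.card : ℝ≥0∞) = m ∧
    (∀ U ∈ 𝒰, EMetric.diam U ≤ ENNReal.ofReal r) ∧ F ⊆ ⋃ U ∈ 𝒰, U}

/-- Regularized Assouad spectrum `dim_{A,reg}^θ(F)`. -/
def dimAreg {X : Type*} [PseudoMetricSpace X] (θ : ℝ) (F : Set X) : ℝ :=
  sInf {α : ℝ | 0 < α ∧ ∃ C : ℝ, 0 < C ∧ ∀ x ∈ F, ∀ r R : ℝ,
    0 < r → r ≤ R ^ (1/θ) → R ^ (1/θ) < R → R < 1 →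
    coverN (closedBall x R ∩ F) r ≤ ENNReal.ofReal (C * (R/r) ^ α)}

/-- (Unregularized) Assouad spectrum `dim_A^θ(F)`. -/
def dimAspec {X : Type*} [PseudoMetricSpace X] (θ : ℝ) (F : Set X) : ℝ :=
  sInf {α : ℝ | 0 < α ∧ ∃ C : ℝ, 0 < C ∧ ∀ x ∈ F, ∀ R : ℝ, 0 < R → R < 1 →
    coverN (closedBall x R ∩ F) (R ^ (1/θ)) ≤ ENNReal.ofReal (C * (R / R ^ (1/θ)) ^ α)}

/-- Upper box-counting dimension of a (bounded) set. -/
def dimBupper {X : Type*} [PseudoMetricSpace X] (F : Set X) : ℝ :=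
  sInf {α : ℝ | 0 < α ∧ ∃ C : ℝ, 0 < C ∧ ∀ r : ℝ, 0 < r → r ≤ diam F →
    coverN F r ≤ ENNReal.ofReal (C * r ^ (-α))}

/-- Assouad dimension. -/
def dimA {X : Type*} [PseudoMetricSpace X] (F : Set X) : ℝ :=
  sInf {α : ℝ | 0 < α ∧ ∃ C : ℝ, 0 < C ∧ ∀ x ∈ F, ∀ r R : ℝ, 0 < r → r ≤ R →
    coverN (closedBall x R ∩ F) r ≤ ENNReal.ofReal (C * (R/r) ^ α)}

/-- Quasi-Assouad dimension: `sup_{0<θ<1} dim_{A,reg}^θ(F)`. -/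
def dimqA {X : Type*} [PseudoMetricSpace X] (F : Set X) : ℝ :=
  sSup ((fun θ => dimAreg θ F) '' Ioo (0:ℝ) 1)

open Classical in
/-- Phase-transition parameter `ρ(F)`. -/
def rhoPT {X : Type*} [PseudoMetricSpace X] (F : Set X) : ℝ :=
  if ∃ θ ∈ Ioo (0:ℝ) 1, dimAreg θ F = dimqA F
  then sInf {θ | θ ∈ Ioo (0:ℝ) 1 ∧ dimAreg θ F = dimqA F}
  else 1

/-- The axes-parallel cube `Q(x,R) = ∏ [xᵢ - R, xᵢ + R]`. -/
def cubeQ {n : ℕ} (x : EuclideanSpace ℝ (Fin n)) (R : ℝ) : Set (EuclideanSpace ℝ (Fin n)) :=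
  {y | ∀ i, x i - R ≤ y i ∧ y i ≤ x i + R}

/-- The generation-`m` dyadic subcube of `Q(x,R)` with index `k`. -/
def dyadicCube {n : ℕ} (x : EuclideanSpace ℝ (Fin n)) (R : ℝ) (m : ℕ)
    (k : Fin n → Fin (2 ^ m)) : Set (EuclideanSpace ℝ (Fin n)) :=
  {y | ∀ i, x i - R + (k i : ℝ) * (2 * R / 2 ^ m) ≤ y i ∧
        y i ≤ x i - R + ((k i : ℝ) + 1) * (2 * R / 2 ^ m)}

/-- `N_d(B(x,R) ∩ F, m)`: the number of generation-`m` dyadic subcubes of `Q(x,R)`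
that intersect `B(x,R) ∩ F`. -/
def Nd {n : ℕ} (x : EuclideanSpace ℝ (Fin n)) (R : ℝ)
    (F : Set (EuclideanSpace ℝ (Fin n))) (m : ℕ) : ℕ :=
  Nat.card {k : Fin n → Fin (2 ^ m) // (dyadicCube x R m k ∩ (closedBall x R ∩ F)).Nonempty}

/-- `f` is `η`-quasisymmetric on the set `S`. -/
def QSOn {X Y : Type*} [PseudoMetricSpace X] [PseudoMetricSpace Y]
    (η : ℝ → ℝ) (f : X → Y) (S : Set X) : Prop :=
  ∀ x ∈ S, ∀ y ∈ S, ∀ z ∈ S, x ≠ z →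
    dist (f x) (f y) ≤ η (dist x y / dist x z) * dist (f x) (f z)

/-- Distance between two sets. -/
def setDist {X : Type*} [PseudoMetricSpace X] (A B : Set X) : ℝ :=
  sInf {d : ℝ | ∃ a ∈ A, ∃ b ∈ B, d = dist a b}

end

section Stmt8Aux

section AUX
variable {X : Type*} [PseudoMetricSpace X]

lemma coverN_le_card {F : Set X} {r : ℝ} (𝒰 : Finset (Set X))
    (hd : ∀ U ∈ 𝒰, EMetric.diam U ≤ ENNReal.ofReal r) (hc : F ⊆ ⋃ U ∈ 𝒰, U) :
    coverN F r ≤ (𝒰.card : ℝ≥0∞) :=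
  sInf_le ⟨𝒰, rfl, hd, hc⟩

lemma coverN_anti (F : Set X) {r r' : ℝ} (h : r' ≤ r) :
    coverN F r ≤ coverN F r' := by
  apply sInf_le_sInf
  rintro m ⟨𝒰, h1, h2, h3⟩
  exact ⟨𝒰, h1, fun U hU => (h2 U hU).trans (ENNReal.ofReal_le_ofReal h), h3⟩

end AUX

lemma coord_le_dist {n : ℕ} (x y : EuclideanSpace ℝ (Fin n)) (i : Fin n) :
    |y i - x i| ≤ dist y x := by
  rw [EuclideanSpace.dist_eq]
  have h1 : |y i - x i| = Real.sqrt (dist (y i) (x i) ^ 2) := by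
    rw [Real.sqrt_sq dist_nonneg, Real.dist_eq]
  rw [h1]
  apply Real.sqrt_le_sqrt
  exact Finset.single_le_sum (f := fun j => dist (y j) (x j) ^ 2)
    (fun j _ => sq_nonneg _) (Finset.mem_univ i)

/-- The basic grid covering bound in Euclidean space. -/
lemma coverN_ball_le {n : ℕ} (F : Set (EuclideanSpace ℝ (Fin n)))
    (x : EuclideanSpace ℝ (Fin n)) {r R : ℝ} (hr : 0 < r) (hrR : r ≤ R) :
    coverN (closedBall x R ∩ F) r ≤
      ENNReal.ofReal ((2 * Real.sqrt n + 1) ^ n * (R / r) ^ ((n : ℝ) + 1)) := by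
  classical
  have hR : 0 < R := hr.trans_le hrR
  set q : ℝ := 2 * Real.sqrt n * R / r with hq
  have hq0 : 0 ≤ q := by positivity
  set M : ℕ := ⌊q⌋₊ + 1 with hM
  have hM0 : 0 < (M : ℝ) := by positivity
  have hqM : q ≤ M := by
    have := Nat.lt_floor_add_one q
    push_cast [hM]; linarith
  set s : ℝ := 2 * R / M with hs
  have hs0 : 0 < s := by positivity
  -- cells
  set cell : (Fin n → Fin M) → Set (EuclideanSpace ℝ (Fin n)) := fun k =>
    {y | ∀ i, x i - R + (k i : ℝ) * s ≤ y i ∧ y i ≤ x i - R + ((k i : ℝ) + 1) * s} with hcell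
  set 𝒰 : Finset (Set (EuclideanSpace ℝ (Fin n))) := Finset.image cell Finset.univ with hU
  -- diameter bound
  have hside : Real.sqrt n * s ≤ r := by
    have key : 2 * Real.sqrt n * R ≤ r * M := by
      have h := hqM
      rw [hq, div_le_iff₀ hr] at h
      linarith
    have h2 : Real.sqrt n * s = Real.sqrt n * (2 * R) / M := by rw [hs]; ring
    rw [h2, div_le_iff₀ hM0]
    linarith
  have hdiam : ∀ U ∈ 𝒰, EMetric.diam U ≤ ENNReal.ofReal r := by
    intro U hUm
    rw [hU, Finset.mem_image] at hUm
    obtain ⟨k, -, rfl⟩ := hUm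
    apply EMetric.diam_le
    intro y hy z hz
    rw [edist_dist]
    apply ENNReal.ofReal_le_ofReal
    rw [EuclideanSpace.dist_eq]
    have hcoord : ∀ i, dist (y i) (z i) ^ 2 ≤ s ^ 2 := by
      intro i
      have h1 := hy i
      have h2 := hz i
      have : |y i - z i| ≤ s := by
        rw [abs_le]
        constructor <;> nlinarith [h1.1, h1.2, h2.1, h2.2]
      calc dist (y i) (z i) ^ 2 = |y i - z i| ^ 2 := by rw [Real.dist_eq, sq_abs]
        _ ≤ s ^ 2 := by nlinarith [abs_nonneg (y i - z i)]
    calc Real.sqrt (∑ i, dist (y i) (z i) ^ 2) ≤ Real.sqrt (∑ _i : Fin n, s ^ 2) :=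
          Real.sqrt_le_sqrt (Finset.sum_le_sum fun i _ => hcoord i)
      _ = Real.sqrt ((n : ℝ) * s ^ 2) := by
          rw [Finset.sum_const, Finset.card_univ, Fintype.card_fin, nsmul_eq_mul]
      _ = Real.sqrt n * s := by
          rw [Real.sqrt_mul (Nat.cast_nonneg n), Real.sqrt_sq hs0.le]
      _ ≤ r := hside
  -- covering
  have hcover : closedBall x R ∩ F ⊆ ⋃ U ∈ 𝒰, U := by
    intro y hy
    have hyB := hy.1
    have hcoord : ∀ i, x i - R ≤ y i ∧ y i ≤ x i + R := by
      intro i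
      have := (coord_le_dist x y i).trans (mem_closedBall.mp hyB)
      rw [abs_le] at this
      constructor <;> linarith [this.1, this.2]
    have hk : ∀ i, min ⌊(y i - (x i - R)) / s⌋₊ (M - 1) < M := fun i =>
      lt_of_le_of_lt (min_le_right _ _) (Nat.sub_lt (Nat.succ_pos _) one_pos)
    set k : Fin n → Fin M := fun i => ⟨min ⌊(y i - (x i - R)) / s⌋₊ (M - 1), hk i⟩ with hkdef
    have hmem : y ∈ cell k := by
      intro i
      set u : ℝ := y i - (x i - R) with hu
      have hu0 : 0 ≤ u := by have := (hcoord i).1; simp [hu]; linarith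
      have hu2R : u ≤ 2 * R := by have := (hcoord i).2; simp [hu]; linarith
      have hMs : (M : ℝ) * s = 2 * R := by
        rw [hs]; field_simp
      have hki : ((k i : ℕ) : ℝ) ≤ u / s := by
        have h1 : (k i : ℕ) ≤ ⌊u / s⌋₊ := min_le_left _ _
        calc ((k i : ℕ) : ℝ) ≤ (⌊u / s⌋₊ : ℝ) := by exact_mod_cast h1
          _ ≤ u / s := Nat.floor_le (by positivity)
      have hki2 : u ≤ ((k i : ℕ) + 1 : ℝ) * s := by
        rcases le_or_gt (⌊u / s⌋₊) (M - 1) with hc | hc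
        · have : (k i : ℕ) = ⌊u / s⌋₊ := min_eq_left hc
          rw [this]
          have := Nat.lt_floor_add_one (u / s)
          rw [div_lt_iff₀ hs0] at this
          push_cast
          linarith
        · have : (k i : ℕ) = M - 1 := min_eq_right hc.le
          rw [this]
          have hM1 : ((M - 1 : ℕ) : ℝ) + 1 = M := by
            have : 1 ≤ M := Nat.succ_le_of_lt (Nat.succ_pos _)
            push_cast [Nat.cast_sub this]
            ring
          rw [hM1, hMs]
          exact hu2R
      constructor
      · have : ((k i : ℕ) : ℝ) * s ≤ u := by
          calc ((k i : ℕ) : ℝ) * s ≤ (u / s) * s := by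
                apply mul_le_mul_of_nonneg_right hki hs0.le
            _ = u := by field_simp
        simp only [hu] at this ⊢
        linarith
      · have := hki2
        simp only [hu] at this ⊢
        linarith
    exact mem_iUnion₂.mpr ⟨cell k, Finset.mem_image_of_mem cell (Finset.mem_univ k), hmem⟩
  -- count
  have hcard : (𝒰.card : ℝ≥0∞) ≤ ((M ^ n : ℕ) : ℝ≥0∞) := by
    have h1 : 𝒰.card ≤ (Finset.univ : Finset (Fin n → Fin M)).card := Finset.card_image_le
    have h2 : (Finset.univ : Finset (Fin n → Fin M)).card = M ^ n := by
      simp [Finset.card_univ]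
    exact_mod_cast h1.trans_eq h2
  have hnum : ((M ^ n : ℕ) : ℝ) ≤ (2 * Real.sqrt n + 1) ^ n * (R / r) ^ ((n : ℝ) + 1) := by
    have hRr : 1 ≤ R / r := (one_le_div hr).mpr hrR
    have hMle : (M : ℝ) ≤ (2 * Real.sqrt n + 1) * (R / r) := by
      have : (M : ℝ) ≤ q + 1 := by
        rw [hM]; push_cast; linarith [Nat.floor_le hq0]
      calc (M : ℝ) ≤ q + 1 := this
        _ = 2 * Real.sqrt n * (R / r) + 1 := by rw [hq]; ring
        _ ≤ 2 * Real.sqrt n * (R / r) + (R / r) := by linarith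
        _ = (2 * Real.sqrt n + 1) * (R / r) := by ring
    have hpow : ((M : ℝ)) ^ n ≤ ((2 * Real.sqrt n + 1) * (R / r)) ^ n :=
      pow_le_pow_left₀ (Nat.cast_nonneg M) hMle n
    have hrpow : (R / r) ^ ((n : ℝ) + 1) = (R / r) ^ (n + 1) := by
      rw [← Real.rpow_natCast (R / r) (n + 1)]
      push_cast
      ring_nf
    have hcast : ((M ^ n : ℕ) : ℝ) = (M : ℝ) ^ n := by push_cast; ring
    rw [hcast, hrpow, pow_succ]
    calc (M : ℝ) ^ n ≤ (2 * Real.sqrt n + 1) ^ n * (R / r) ^ n := by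
          rw [← mul_pow]; exact hpow
      _ ≤ (2 * Real.sqrt n + 1) ^ n * ((R / r) ^ n * (R / r)) := by
          have h1 : (R / r) ^ n * 1 ≤ (R / r) ^ n * (R / r) :=
            mul_le_mul_of_nonneg_left hRr (by positivity)
          have h0 : (0:ℝ) ≤ (2 * Real.sqrt n + 1) ^ n := by positivity
          nlinarith [h1]
  calc coverN (closedBall x R ∩ F) r ≤ (𝒰.card : ℝ≥0∞) := coverN_le_card 𝒰 hdiam hcover
    _ ≤ ((M ^ n : ℕ) : ℝ≥0∞) := hcard
    _ = ENNReal.ofReal ((M ^ n : ℕ) : ℝ) := by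
        rw [ENNReal.ofReal_natCast]
    _ ≤ _ := ENNReal.ofReal_le_ofReal hnum

/-- The defining set for `dimAreg`. -/
def specSet {X : Type*} [PseudoMetricSpace X] (θ : ℝ) (F : Set X) : Set ℝ :=
  {α : ℝ | 0 < α ∧ ∃ C : ℝ, 0 < C ∧ ∀ x ∈ F, ∀ r R : ℝ,
    0 < r → r ≤ R ^ (1/θ) → R ^ (1/θ) < R → R < 1 →
    coverN (closedBall x R ∩ F) r ≤ ENNReal.ofReal (C * (R/r) ^ α)}

lemma dimAreg_eq {X : Type*} [PseudoMetricSpace X] (θ : ℝ) (F : Set X) :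
    dimAreg θ F = sInf (specSet θ F) := rfl

lemma specSet_bddBelow {X : Type*} [PseudoMetricSpace X] (θ : ℝ) (F : Set X) :
    BddBelow (specSet θ F) := ⟨0, fun α hα => hα.1.le⟩

lemma mem_specSet {n : ℕ} (F : Set (EuclideanSpace ℝ (Fin n))) (θ : ℝ) :
    ((n : ℝ) + 1) ∈ specSet θ F := by
  refine ⟨by positivity, (2 * Real.sqrt n + 1) ^ n, by positivity, ?_⟩
  intro x hx r R hr h1 h2 h3
  have hrR : r ≤ R := h1.trans h2.le
  exact coverN_ball_le F x hr hrR

lemma specSet_nonempty {n : ℕ} (F : Set (EuclideanSpace ℝ (Fin n))) (θ : ℝ) :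
    (specSet θ F).Nonempty := ⟨_, mem_specSet F θ⟩

lemma dimAreg_nonneg {n : ℕ} (F : Set (EuclideanSpace ℝ (Fin n))) (θ : ℝ) :
    0 ≤ dimAreg θ F :=
  Real.sInf_nonneg (fun α hα => hα.1.le)

lemma dimAreg_le_np1 {n : ℕ} (F : Set (EuclideanSpace ℝ (Fin n))) (θ : ℝ) :
    dimAreg θ F ≤ (n : ℝ) + 1 :=
  csInf_le (specSet_bddBelow θ F) (mem_specSet F θ)

lemma specSet_subset {X : Type*} [PseudoMetricSpace X] (F : Set X) {θ₁ θ₂ : ℝ}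
    (h0 : 0 < θ₁) (h12 : θ₁ ≤ θ₂) (h1 : θ₂ < 1) :
    specSet θ₂ F ⊆ specSet θ₁ F := by
  rintro α ⟨hα, C, hC, hP⟩
  refine ⟨hα, C, hC, ?_⟩
  intro x hx r R hr hr1 hr2 hR1
  have hR0 : 0 < R := lt_trans (hr.trans_le hr1) hr2
  have h20 : 0 < θ₂ := h0.trans_le h12
  have hexp : 1 / θ₂ ≤ 1 / θ₁ := one_div_le_one_div_of_le h0 h12
  have hle : R ^ (1/θ₁) ≤ R ^ (1/θ₂) :=
    Real.rpow_le_rpow_of_exponent_ge hR0 hR1.le hexp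
  have h1θ₂ : 1 < 1 / θ₂ := one_lt_one_div h20 h1
  have hlt : R ^ (1/θ₂) < R := by
    calc R ^ (1/θ₂) < R ^ (1:ℝ) := Real.rpow_lt_rpow_of_exponent_gt hR0 hR1 h1θ₂
      _ = R := Real.rpow_one R
  exact hP x hx r R hr (hr1.trans hle) hlt hR1

lemma dimAreg_mono {n : ℕ} (F : Set (EuclideanSpace ℝ (Fin n))) {θ₁ θ₂ : ℝ}
    (h0 : 0 < θ₁) (h12 : θ₁ ≤ θ₂) (h1 : θ₂ < 1) :
    dimAreg θ₁ F ≤ dimAreg θ₂ F :=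
  csInf_le_csInf (specSet_bddBelow θ₁ F) (specSet_nonempty F θ₂)
    (specSet_subset F h0 h12 h1)

/-- Key inequality: `dimAreg θ₂ F ≤ K * dimAreg θ₁ F` with `K = θ₂(1-θ₁)/(θ₁(1-θ₂))`. -/
lemma dimAreg_key {n : ℕ} (F : Set (EuclideanSpace ℝ (Fin n))) {θ₁ θ₂ : ℝ}
    (h0 : 0 < θ₁) (h12 : θ₁ ≤ θ₂) (h1 : θ₂ < 1) :
    dimAreg θ₂ F ≤ (θ₂ * (1 - θ₁) / (θ₁ * (1 - θ₂))) * dimAreg θ₁ F := by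
  set K : ℝ := θ₂ * (1 - θ₁) / (θ₁ * (1 - θ₂)) with hKdef
  have h20 : 0 < θ₂ := h0.trans_le h12
  have h11 : θ₁ < 1 := lt_of_le_of_lt h12 h1
  have hK0 : 0 < K := by
    apply div_pos (by nlinarith) (by nlinarith)
  have hK1 : 1 ≤ K := by
    rw [hKdef, le_div_iff₀ (by nlinarith)]
    nlinarith
  -- show K * α ∈ specSet θ₂ F for each α ∈ specSet θ₁ F
  have hmem : ∀ α ∈ specSet θ₁ F, K * α ∈ specSet θ₂ F := by
    rintro α ⟨hα, C, hC, hP⟩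
    refine ⟨by positivity, C, hC, ?_⟩
    intro x hx r R hr hr1 hr2 hR1
    have hR0 : 0 < R := lt_trans (hr.trans_le hr1) hr2
    have hrR : r < R := lt_of_le_of_lt hr1 hr2
    have hRr1 : 1 < R / r := (one_lt_div hr).mpr hrR
    have hαK : α ≤ K * α := le_mul_of_one_le_left hα.le hK1
    have h1θ₁ : 1 < 1 / θ₁ := one_lt_one_div h0 h11
    have hlt₁ : R ^ (1/θ₁) < R := by
      calc R ^ (1/θ₁) < R ^ (1:ℝ) := Real.rpow_lt_rpow_of_exponent_gt hR0 hR1 h1θ₁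
        _ = R := Real.rpow_one R
    rcases le_or_gt r (R ^ (1/θ₁)) with hcase | hcase
    · -- directly apply
      calc coverN (closedBall x R ∩ F) r ≤ ENNReal.ofReal (C * (R/r) ^ α) :=
            hP x hx r R hr hcase hlt₁ hR1
        _ ≤ ENNReal.ofReal (C * (R/r) ^ (K * α)) := by
            apply ENNReal.ofReal_le_ofReal
            apply mul_le_mul_of_nonneg_left _ hC.le
            exact Real.rpow_le_rpow_of_exponent_le hRr1.le hαK
    · -- use scale r' = R^{1/θ₁}
      have hr'0 : 0 < R ^ (1/θ₁) := Real.rpow_pos_of_pos hR0 _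
      have step1 : coverN (closedBall x R ∩ F) r ≤
          coverN (closedBall x R ∩ F) (R ^ (1/θ₁)) := coverN_anti _ hcase.le
      have step2 : coverN (closedBall x R ∩ F) (R ^ (1/θ₁)) ≤
          ENNReal.ofReal (C * (R / R ^ (1/θ₁)) ^ α) :=
        hP x hx (R ^ (1/θ₁)) R hr'0 le_rfl hlt₁ hR1
      -- numeric comparison
      have hexp_eq : (1 - 1/θ₂) * (K * α) = (1 - 1/θ₁) * α := by
        have e₁ : θ₁ ≠ 0 := ne_of_gt h0
        have e₂ : θ₂ ≠ 0 := ne_of_gt h20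
        have e₃ : (1 : ℝ) - θ₂ ≠ 0 := ne_of_gt (by linarith)
        rw [hKdef]
        field_simp
        ring
      have hbase : R ^ ((1:ℝ) - 1/θ₂) ≤ R / r := by
        rw [Real.rpow_sub hR0, Real.rpow_one]
        exact div_le_div_of_nonneg_left hR0.le hr hr1
      have hnum : (R / R ^ (1/θ₁)) ^ α ≤ (R / r) ^ (K * α) := by
        have e1 : (R / R ^ (1/θ₁)) ^ α = R ^ (((1:ℝ) - 1/θ₁) * α) := by
          rw [Real.rpow_mul hR0.le, Real.rpow_sub hR0, Real.rpow_one]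
        have e2 : R ^ (((1:ℝ) - 1/θ₁) * α) = (R ^ ((1:ℝ) - 1/θ₂)) ^ (K * α) := by
          rw [← Real.rpow_mul hR0.le, hexp_eq]
        calc (R / R ^ (1/θ₁)) ^ α = (R ^ ((1:ℝ) - 1/θ₂)) ^ (K * α) := by rw [e1, e2]
          _ ≤ (R / r) ^ (K * α) :=
              Real.rpow_le_rpow (Real.rpow_nonneg hR0.le _) hbase (by positivity)
      calc coverN (closedBall x R ∩ F) r ≤ _ := step1
        _ ≤ ENNReal.ofReal (C * (R / R ^ (1/θ₁)) ^ α) := step2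
        _ ≤ ENNReal.ofReal (C * (R/r) ^ (K * α)) := by
            apply ENNReal.ofReal_le_ofReal
            exact mul_le_mul_of_nonneg_left hnum hC.le
  -- conclude
  rw [dimAreg_eq θ₂ F, dimAreg_eq θ₁ F]
  have : sInf (specSet θ₂ F) / K ≤ sInf (specSet θ₁ F) := by
    apply le_csInf ⟨_, mem_specSet F θ₁⟩
    intro α hα
    rw [div_le_iff₀ hK0]
    calc sInf (specSet θ₂ F) ≤ K * α := csInf_le (specSet_bddBelow θ₂ F) (hmem α hα)
      _ = α * K := mul_comm _ _
  calc sInf (specSet θ₂ F) = K * (sInf (specSet θ₂ F) / K) := by field_simp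
    _ ≤ K * sInf (specSet θ₁ F) := mul_le_mul_of_nonneg_left this hK0.le


end Stmt8Aux

/-- the regularized Assouad spectrum is nondecreasing in `θ`, locally
Lipschitz on compact subintervals of `(0,1)`, and in particular continuous on `(0,1)`. -/
theorem stmt8 {n : ℕ} (F : Set (EuclideanSpace ℝ (Fin n))) :
    (∀ θ₁ θ₂ : ℝ, 0 < θ₁ → θ₁ ≤ θ₂ → θ₂ < 1 → dimAreg θ₁ F ≤ dimAreg θ₂ F) ∧
    (∀ a b : ℝ, 0 < a → a ≤ b → b < 1 → ∃ L : ℝ, 0 ≤ L ∧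
      ∀ θ₁ ∈ Icc a b, ∀ θ₂ ∈ Icc a b,
        |dimAreg θ₁ F - dimAreg θ₂ F| ≤ L * |θ₁ - θ₂|) ∧
    ContinuousOn (fun θ => dimAreg θ F) (Ioo (0:ℝ) 1) := by
  have lip : ∀ a b : ℝ, 0 < a → a ≤ b → b < 1 → ∃ L : ℝ, 0 ≤ L ∧
      ∀ θ₁ ∈ Icc a b, ∀ θ₂ ∈ Icc a b,
        |dimAreg θ₁ F - dimAreg θ₂ F| ≤ L * |θ₁ - θ₂| := by
    intro a b ha hab hb
    set L : ℝ := ((n : ℝ) + 1) / (a * (1 - b)) with hL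
    have hden : 0 < a * (1 - b) := by nlinarith
    have hL0 : 0 ≤ L := le_of_lt (div_pos (by positivity) hden)
    refine ⟨L, hL0, ?_⟩
    have main : ∀ θ₁ ∈ Icc a b, ∀ θ₂ ∈ Icc a b, θ₁ ≤ θ₂ →
        dimAreg θ₂ F - dimAreg θ₁ F ≤ L * (θ₂ - θ₁) := by
      intro θ₁ h₁ θ₂ h₂ hle
      have ha1 : 0 < θ₁ := lt_of_lt_of_le ha h₁.1
      have hb2 : θ₂ < 1 := lt_of_le_of_lt h₂.2 hb
      have hkey := dimAreg_key F ha1 hle hb2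
      have h0 := dimAreg_nonneg F θ₁
      have hA := dimAreg_le_np1 F θ₁
      set K : ℝ := θ₂ * (1 - θ₁) / (θ₁ * (1 - θ₂)) with hK
      have hd : 0 < θ₁ * (1 - θ₂) := by nlinarith
      have hKm1 : K - 1 = (θ₂ - θ₁) / (θ₁ * (1 - θ₂)) := by
        rw [hK, div_sub_one hd.ne']; ring
      have hfrac : (θ₂ - θ₁) / (θ₁ * (1 - θ₂)) ≤ (θ₂ - θ₁) / (a * (1 - b)) := by
        apply div_le_div_of_nonneg_left (by linarith) hden
        nlinarith [h₁.1, h₂.2]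
      have e1 : dimAreg θ₂ F - dimAreg θ₁ F ≤ (K - 1) * dimAreg θ₁ F := by
        nlinarith [hkey]
      have e2 : (K - 1) * dimAreg θ₁ F ≤ (K - 1) * ((n : ℝ) + 1) := by
        apply mul_le_mul_of_nonneg_left hA
        rw [hKm1]
        exact div_nonneg (by linarith) hd.le
      have e3 : (K - 1) * ((n : ℝ) + 1) ≤ L * (θ₂ - θ₁) := by
        rw [hKm1]
        calc (θ₂ - θ₁) / (θ₁ * (1 - θ₂)) * ((n : ℝ) + 1)
            ≤ (θ₂ - θ₁) / (a * (1 - b)) * ((n : ℝ) + 1) :=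
              mul_le_mul_of_nonneg_right hfrac (by positivity)
          _ = L * (θ₂ - θ₁) := by rw [hL]; ring
      linarith
    intro θ₁ h₁ θ₂ h₂
    rcases le_total θ₁ θ₂ with hle | hle
    · have hm := dimAreg_mono F (lt_of_lt_of_le ha h₁.1) hle (lt_of_le_of_lt h₂.2 hb)
      have habs1 : |dimAreg θ₁ F - dimAreg θ₂ F| = dimAreg θ₂ F - dimAreg θ₁ F := by
        rw [abs_sub_comm]; exact abs_of_nonneg (by linarith)
      have habs2 : |θ₁ - θ₂| = θ₂ - θ₁ := by
        rw [abs_sub_comm]; exact abs_of_nonneg (by linarith)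
      rw [habs1, habs2]
      exact main θ₁ h₁ θ₂ h₂ hle
    · have hm := dimAreg_mono F (lt_of_lt_of_le ha h₂.1) hle (lt_of_le_of_lt h₁.2 hb)
      have habs1 : |dimAreg θ₁ F - dimAreg θ₂ F| = dimAreg θ₁ F - dimAreg θ₂ F :=
        abs_of_nonneg (by linarith)
      have habs2 : |θ₁ - θ₂| = θ₁ - θ₂ := abs_of_nonneg (by linarith)
      rw [habs1, habs2]
      exact main θ₂ h₂ θ₁ h₁ hle
  refine ⟨fun θ₁ θ₂ h1 h2 h3 => dimAreg_mono F h1 h2 h3, lip, ?_⟩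
  intro θ hθ
  apply ContinuousAt.continuousWithinAt
  obtain ⟨L, hL0, hLip⟩ := lip (θ/2) ((θ+1)/2) (by linarith [hθ.1]) (by linarith [hθ.2])
    (by linarith [hθ.2])
  have hlip : LipschitzOnWith (Real.toNNReal L) (fun t => dimAreg t F)
      (Icc (θ/2) ((θ+1)/2)) := by
    rw [lipschitzOnWith_iff_dist_le_mul]
    intro u hu v hv
    rw [Real.dist_eq, Real.dist_eq, Real.coe_toNNReal L hL0]
    exact hLip u hu v hv
  exact hlip.continuousOn.continuousAt
    (Icc_mem_nhds (by linarith [hθ.1]) (by linarith [hθ.2]))
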